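/- The standardized symmetric function is unbiased under sampling without replacement: for distinct exponents configuration π = (π_1,...,π_j) and a simple random sample of size n ≥ j from a population of size N, E[⟨π_1···π_j⟩_n] = ⟨π_1···π_j⟩_N, where ⟨π_1···π_j⟩_m = (1/(m)_j) ∑' y_{i_1}^{π_1}···y_{i_j}^{π_j}, the sum being over j-tuples of distinct indices in {1,...,m}. -/

import Mathlib

open Finset

/-- Expectation under simple random sampling without replacement: the average of `g`
over all ordered samples of `n` distinct indices (i.e. embeddings `Fin n ↪ Fin N`),
each equally likely. -/
noncomputable def srsExp (N n : ℕ) (g : (Fin n ↪ Fin N) → ℝ) : ℝ :=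
  (∑ σ : Fin n ↪ Fin N, g σ) / (Fintype.card (Fin n ↪ Fin N))

/-- The standardized symmetric function
`⟨π₁⋯π_j⟩_m = (1/(m)_j) ∑'_{i₁,…,i_j distinct} y_{i₁}^{π₁} ⋯ y_{i_j}^{π_j}`. -/
noncomputable def stdSymFn (j m : ℕ) (π : Fin j → ℕ) (y : Fin m → ℝ) : ℝ :=
  (∑ τ : Fin j ↪ Fin m, ∏ k, y (τ k) ^ π k) / (m.descFactorial j)

/-- Any two embeddings of `Fin j` into `Fin N` differ by a permutation of `Fin N`. -/
lemma exists_perm_comp {j N : ℕ} (f g : Fin j ↪ Fin N) :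
    ∃ e : Equiv.Perm (Fin N), ∀ k, e (f k) = g k := by
  classical
  have hc : Fintype.card {x // x ∉ Set.range f} = Fintype.card {x // x ∉ Set.range g} := by
    have h1 : Fintype.card (Set.range f) = j :=
      (Fintype.card_congr f.toEquivRange.symm).trans (Fintype.card_fin j)
    have h2 : Fintype.card (Set.range g) = j :=
      (Fintype.card_congr g.toEquivRange.symm).trans (Fintype.card_fin j)
    have e1 := Fintype.card_subtype_compl (fun x : Fin N => x ∈ Set.range f)
    have e2 := Fintype.card_subtype_compl (fun x : Fin N => x ∈ Set.range g)
    rw [e1, e2]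
    congr 1
    · exact h1.trans h2.symm
  obtain ⟨w⟩ := Fintype.card_eq.mp hc
  refine ⟨(Equiv.sumCompl (· ∈ Set.range f)).symm.trans
      (((Equiv.sumCongr (f.toEquivRange.symm.trans g.toEquivRange) w)).trans
      (Equiv.sumCompl (· ∈ Set.range g))), ?_⟩
  intro k
  simp only [Equiv.trans_apply]
  rw [Equiv.sumCompl_symm_apply_of_pos (Set.mem_range_self k)]
  simp [Function.Embedding.toEquivRange_symm_apply_self, Function.Embedding.toEquivRange_apply]

/-- Unbiasedness of the standardized symmetric function under SRSWOR:
`E⟨π₁⋯π_j⟩_n = ⟨π₁⋯π_j⟩_N`. -/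
theorem srs_symFn_unbiased (N n j : ℕ) (hj : j ≤ n) (hnN : n ≤ N)
    (π : Fin j → ℕ) (x : Fin N → ℝ) :
    srsExp N n (fun σ => stdSymFn j n π (fun i => x (σ i))) = stdSymFn j N π x := by
  classical
  set φ : (Fin n ↪ Fin N) × (Fin j ↪ Fin n) → (Fin j ↪ Fin N) :=
    fun p => p.2.trans p.1 with hφ
  set f : (Fin j ↪ Fin N) → ℝ := fun ρ => ∏ k, x (ρ k) ^ π k with hf
  -- constant fibers
  have hconst : ∀ ρ ρ' : Fin j ↪ Fin N,
      (univ.filter (fun p => φ p = ρ)).card = (univ.filter (fun p => φ p = ρ')).card := by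
    intro ρ ρ'
    obtain ⟨e, he⟩ := exists_perm_comp ρ ρ'
    refine Finset.card_nbij' (fun p => (p.1.trans e.toEmbedding, p.2))
      (fun p => (p.1.trans e.symm.toEmbedding, p.2)) ?_ ?_ ?_ ?_
    · intro p hp
      simp only [coe_filter, mem_filter, mem_univ, true_and, Set.mem_setOf_eq] at hp ⊢
      apply Function.Embedding.ext; intro k
      have hk := DFunLike.congr_fun hp k
      simp only [hφ, Function.Embedding.trans_apply, Equiv.coe_toEmbedding] at hk ⊢
      rw [hk, he]
    · intro p hp
      simp only [coe_filter, mem_filter, mem_univ, true_and, Set.mem_setOf_eq] at hp ⊢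
      apply Function.Embedding.ext; intro k
      have hk := DFunLike.congr_fun hp k
      simp only [hφ, Function.Embedding.trans_apply, Equiv.coe_toEmbedding] at hk ⊢
      apply e.injective
      rw [he, ← hk]
      simp
    · intro p _
      apply Prod.ext
      · apply Function.Embedding.ext; intro k; simp
      · rfl
    · intro p _
      apply Prod.ext
      · apply Function.Embedding.ext; intro k; simp
      · rfl
  -- pick a base embedding
  set ρ₀ : Fin j ↪ Fin N := (Fin.castLEEmb hj).trans (Fin.castLEEmb hnN) with hρ₀
  set c : ℕ := (univ.filter (fun p => φ p = ρ₀)).card with hc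
  -- sum over pairs, fiberwise
  have key : ∀ g : (Fin j ↪ Fin N) → ℝ,
      ∑ p : (Fin n ↪ Fin N) × (Fin j ↪ Fin n), g (φ p)
      = ∑ ρ : Fin j ↪ Fin N, (c : ℝ) * g ρ := by
    intro g
    rw [← Finset.sum_fiberwise_of_maps_to (fun p _ => mem_univ (φ p)) (fun p => g (φ p))]
    refine Finset.sum_congr rfl ?_
    intro ρ _
    have h1 : ∑ p ∈ univ.filter (fun p => φ p = ρ), g (φ p)
        = (univ.filter (fun p => φ p = ρ)).card • g ρ := by
      rw [← Finset.sum_const]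
      refine Finset.sum_congr rfl fun p hp => ?_
      simp only [mem_filter] at hp
      rw [hp.2]
    rw [h1, ← hconst ρ₀ ρ, nsmul_eq_mul]
  have hsum := key f
  have hcard : ((Fintype.card (Fin n ↪ Fin N)) * (Fintype.card (Fin j ↪ Fin n)) : ℝ)
      = (Fintype.card (Fin j ↪ Fin N)) * c := by
    have := key 1
    simpa [Fintype.card_prod, mul_comm, mul_assoc] using this
  -- nonvanishing
  have hnd : ((n.descFactorial j : ℕ) : ℝ) ≠ 0 := Nat.cast_ne_zero.mpr
    (fun h => absurd (Nat.descFactorial_eq_zero_iff_lt.mp h) (not_lt.mpr hj))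
  have hNd : ((N.descFactorial n : ℕ) : ℝ) ≠ 0 := Nat.cast_ne_zero.mpr
    (fun h => absurd (Nat.descFactorial_eq_zero_iff_lt.mp h) (not_lt.mpr hnN))
  have hNj : ((N.descFactorial j : ℕ) : ℝ) ≠ 0 := Nat.cast_ne_zero.mpr
    (fun h => absurd (Nat.descFactorial_eq_zero_iff_lt.mp h) (not_lt.mpr (hj.trans hnN)))
  have hcard' : ((N.descFactorial n : ℕ) : ℝ) * (n.descFactorial j : ℕ)
      = ((N.descFactorial j : ℕ) : ℝ) * c := by
    simp only [Fintype.card_embedding_eq, Fintype.card_fin] at hcard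
    exact_mod_cast hcard
  simp only [srsExp, stdSymFn]
  rw [← Finset.sum_div, Fintype.card_embedding_eq, Fintype.card_fin, Fintype.card_fin]
  have h2 : ∑ σ : Fin n ↪ Fin N, ∑ τ : Fin j ↪ Fin n, ∏ k, x (σ (τ k)) ^ π k
      = (c : ℝ) * ∑ ρ : Fin j ↪ Fin N, f ρ := by
    rw [Finset.mul_sum, ← hsum, Fintype.sum_prod_type]
    rfl
  rw [h2, div_div, div_eq_div_iff (by positivity) (by
    exact_mod_cast hNj)]
  linear_combination (-(∑ ρ : Fin j ↪ Fin N, f ρ)) * hcard'
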